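/- Let A, B ∈ ℝ^{d×d} be positive semidefinite matrices with A ⪯ B. Then for every vector x in the image of A, x^T B^+ x ≤ x^T A^+ x, where X^+ denotes the Moore–Penrose pseudoinverse. -/

import Mathlib

open Matrix

/-- `B` is the Moore–Penrose pseudoinverse of `A`. -/
def IsMoorePenrose {n d : Type*} [Fintype n] [Fintype d]
    (A : Matrix n d ℝ) (B : Matrix d n ℝ) : Prop :=
  A * B * A = A ∧ B * A * B = B ∧ (A * B)ᵀ = A * B ∧ (B * A)ᵀ = B * A

/-- For a symmetric matrix, it can be moved across a dot product. -/
lemma symm_dot {d : ℕ} (M : Matrix (Fin d) (Fin d) ℝ) (hM : Mᵀ = M)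
    (a b : Fin d → ℝ) : a ⬝ᵥ (M *ᵥ b) = (M *ᵥ a) ⬝ᵥ b := by
  rw [dotProduct_mulVec, ← Matrix.mulVec_transpose, hM]

/-- If `A ⪯ B` are PSD matrices, then for every `x ∈ Im A`,
`xᵀ B⁺ x ≤ xᵀ A⁺ x`. -/
theorem pinv_quadratic_antitone {d : ℕ} (A B : Matrix (Fin d) (Fin d) ℝ)
    (hA : A.PosSemidef) (hB : B.PosSemidef) (hAB : (B - A).PosSemidef)
    (P Q : Matrix (Fin d) (Fin d) ℝ) (hP : IsMoorePenrose A P) (hQ : IsMoorePenrose B Q)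
    (x : Fin d → ℝ) (hx : ∃ y : Fin d → ℝ, A *ᵥ y = x) :
    x ⬝ᵥ (Q *ᵥ x) ≤ x ⬝ᵥ (P *ᵥ x) := by
  obtain ⟨y, hy⟩ := hx
  have hAsymm : Aᵀ = A := hA.1
  have hBsymm : Bᵀ = B := hB.1
  -- kernel inclusion : B v = 0 → A v = 0
  have hker : ∀ v : Fin d → ℝ, B *ᵥ v = 0 → A *ᵥ v = 0 := by
    intro v hv
    have h1 : 0 ≤ v ⬝ᵥ (B - A) *ᵥ v := by simpa using hAB.dotProduct_mulVec_nonneg v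
    have h2 : 0 ≤ v ⬝ᵥ A *ᵥ v := by simpa using hA.dotProduct_mulVec_nonneg v
    have h4 : v ⬝ᵥ (B - A) *ᵥ v = v ⬝ᵥ B *ᵥ v - v ⬝ᵥ A *ᵥ v := by
      rw [sub_mulVec, dotProduct_sub]
    rw [hv, dotProduct_zero] at h4
    have h3 : v ⬝ᵥ A *ᵥ v = 0 := by linarith
    exact (hA.dotProduct_mulVec_zero_iff v).mp (by simpa using h3)
  set z : Fin d → ℝ := Q *ᵥ x with hz
  -- x lies in the image of B, with witness z = Q x
  have hBQtB : B * Qᵀ * B = B := by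
    have h0 := congrArg Matrix.transpose hQ.1
    rwa [Matrix.transpose_mul, Matrix.transpose_mul, hBsymm, ← Matrix.mul_assoc] at h0
  have hBBQ : B * B * Q = B := by
    calc B * B * Q = B * (B * Q) := by rw [Matrix.mul_assoc]
      _ = B * (B * Q)ᵀ := by rw [hQ.2.2.1]
      _ = B * (Qᵀ * Bᵀ) := by rw [Matrix.transpose_mul]
      _ = B * Qᵀ * B := by rw [hBsymm, Matrix.mul_assoc]
      _ = B := hBQtB
  have hBz : B *ᵥ z = x := by
    set v : Fin d → ℝ := x - B *ᵥ z with hv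
    have hBv : B *ᵥ v = 0 := by
      have h5 : B *ᵥ (B *ᵥ z) = B *ᵥ x := by
        rw [hz, mulVec_mulVec, mulVec_mulVec, hBBQ]
      rw [hv, mulVec_sub, h5, sub_self]
    have hAv : A *ᵥ v = 0 := hker v hBv
    have hvx : v ⬝ᵥ x = 0 := by
      rw [← hy, symm_dot A hAsymm, hAv, zero_dotProduct]
    have hvBz : v ⬝ᵥ (B *ᵥ z) = 0 := by
      rw [symm_dot B hBsymm, hBv, zero_dotProduct]
    have hvv : v ⬝ᵥ v = 0 := by
      have : v ⬝ᵥ v = v ⬝ᵥ x - v ⬝ᵥ (B *ᵥ z) := by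
        rw [← dotProduct_sub]
      rw [this, hvx, hvBz, sub_zero]
    have hv0 : v = 0 := (dotProduct_self_eq_zero).mp hvv
    have := sub_eq_zero.mp (hv ▸ hv0)
    exact this.symm
  -- x P x = y A y
  have hxPx : x ⬝ᵥ (P *ᵥ x) = y ⬝ᵥ (A *ᵥ y) := by
    conv_lhs => rw [← hy]
    rw [← symm_dot A hAsymm, mulVec_mulVec, mulVec_mulVec, hP.1]
  -- cross term
  have hxz : x ⬝ᵥ z = y ⬝ᵥ (A *ᵥ z) := by
    rw [← hy, ← symm_dot A hAsymm]
  -- quadratic inequality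
  have hquad : 0 ≤ (y - z) ⬝ᵥ (A *ᵥ (y - z)) := by simpa using hA.dotProduct_mulVec_nonneg (y - z)
  have hexp : (y - z) ⬝ᵥ (A *ᵥ (y - z))
      = y ⬝ᵥ (A *ᵥ y) - 2 * (y ⬝ᵥ (A *ᵥ z)) + z ⬝ᵥ (A *ᵥ z) := by
    have hcross : z ⬝ᵥ (A *ᵥ y) = y ⬝ᵥ (A *ᵥ z) := by
      rw [symm_dot A hAsymm, dotProduct_comm]
    rw [mulVec_sub, dotProduct_sub, sub_dotProduct, sub_dotProduct, hcross]
    ring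
  -- A vs B quadratic form at z
  have hABz : z ⬝ᵥ (A *ᵥ z) ≤ z ⬝ᵥ (B *ᵥ z) := by
    have h1 : 0 ≤ z ⬝ᵥ (B - A) *ᵥ z := by simpa using hAB.dotProduct_mulVec_nonneg z
    have h4 : z ⬝ᵥ (B - A) *ᵥ z = z ⬝ᵥ B *ᵥ z - z ⬝ᵥ A *ᵥ z := by
      rw [sub_mulVec, dotProduct_sub]
    linarith [h4 ▸ h1]
  have hzBz : z ⬝ᵥ (B *ᵥ z) = x ⬝ᵥ z := by
    rw [hBz, dotProduct_comm]
  -- combine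
  have : x ⬝ᵥ z ≤ x ⬝ᵥ (P *ᵥ x) := by
    rw [hxPx]
    have := hexp ▸ hquad
    linarith [hzBz ▸ hABz, hxz]
  exact this
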